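/- Let G be a graph of order n = 4k+1 whose Seidel matrix S is singular with a nullspace vector φ ∈ {±1}^n. If G has a vertex of degree 1, then the number of odd-degree vertices of G is exactly 2k or 2k + 2. -/
import Mathlib


open Matrix Finset

def seidelMatrix {n : ℕ} (G : SimpleGraph (Fin n)) [DecidableRel G.Adj] :
    Matrix (Fin n) (Fin n) ℤ :=
  Matrix.of fun i j => if i = j then 0 else if G.Adj i j then -1 else 1

theorem leaf_odd_vertex_count {n k : ℕ} (hn : n = 4 * k + 1)
    (G : SimpleGraph (Fin n)) [DecidableRel G.Adj]
    (hsing : (seidelMatrix G).det = 0)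
    (hφ : ∃ φ : Fin n → ℤ, (∀ i, φ i = 1 ∨ φ i = -1) ∧ (seidelMatrix G).mulVec φ = 0)
    (hleaf : ∃ v, G.degree v = 1) :
    (Finset.univ.filter fun v => Odd (G.degree v)).card = 2 * k ∨
    (Finset.univ.filter fun v => Odd (G.degree v)).card = 2 * k + 2 := by
  obtain ⟨φ, hsign, hmul⟩ := hφ
  set T : ℤ := ∑ j, φ j with hT
  set N : Fin n → ℤ := fun i => ∑ j ∈ G.neighborFinset i, φ j with hN
  -- key equation from the nullspace condition
  have key : ∀ i, T = φ i + 2 * N i := by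
    intro i
    have h0 : ∑ j, seidelMatrix G i j * φ j = 0 := congrFun hmul i
    have h1 : ∀ j, seidelMatrix G i j * φ j
        = φ j - (if i = j then φ j else 0) - 2 * (if G.Adj i j then φ j else 0) := by
      intro j
      by_cases h : i = j
      · subst h; simp [seidelMatrix, G.irrefl]
      · by_cases ha : G.Adj i j <;> simp [seidelMatrix, h, ha] <;> ring
    rw [Finset.sum_congr rfl fun j _ => h1 j] at h0
    have h2 : ∑ j, (φ j - (if i = j then φ j else 0) - 2 * (if G.Adj i j then φ j else 0))
        = T - φ i - 2 * N i := by
      rw [Finset.sum_sub_distrib, Finset.sum_sub_distrib, Finset.sum_ite_eq, ← Finset.mul_sum]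
      simp [hT, hN, SimpleGraph.neighborFinset_eq_filter, Finset.sum_filter]
    rw [h2] at h0
    linarith
  -- parity of the degrees
  have parity : ∀ i, Odd (G.degree i) ↔ Odd (N i) := by
    intro i
    have hmod : N i % 2 = (G.degree i : ℤ) % 2 := by
      rw [hN]
      simp only
      rw [Finset.sum_int_mod]
      have h1 : ∀ j ∈ G.neighborFinset i, φ j % 2 = 1 % 2 := by
        intro j _
        rcases hsign j with h | h <;> simp [h]
      rw [Finset.sum_congr rfl h1, Finset.sum_const, ← G.card_neighborFinset_eq_degree]
      simp [mul_comm]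
    rw [Int.odd_iff, hmod, ← Int.odd_iff, Int.odd_coe_nat]
  -- the leaf forces N v = ±1
  obtain ⟨v, hv⟩ := hleaf
  have hcard1 : (G.neighborFinset v).card = 1 := by
    rw [G.card_neighborFinset_eq_degree, hv]
  obtain ⟨u, hu⟩ := Finset.card_eq_one.mp hcard1
  have hNv : N v = 1 ∨ N v = -1 := by
    have : N v = φ u := by rw [hN]; simp [hu]
    rw [this]; exact hsign u
  have hTval : T = 3 ∨ T = 1 ∨ T = -1 ∨ T = -3 := by
    have := key v
    rcases hsign v with h | h <;> rcases hNv with h' | h' <;> omega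
  -- counting the sign classes
  have hpartition : (Finset.univ.filter fun i => ¬ φ i = 1)
      = Finset.univ.filter fun i => φ i = -1 := by
    apply Finset.filter_congr
    intro i _
    rcases hsign i with h | h <;> simp [h]
  have hcard : (Finset.univ.filter fun i => φ i = 1).card
      + (Finset.univ.filter fun i => φ i = -1).card = n := by
    have h := Finset.card_filter_add_card_filter_not
      (s := (Finset.univ : Finset (Fin n))) (p := fun i => φ i = 1)
    rw [hpartition] at h
    simpa using h
  have hsum : ((Finset.univ.filter fun i => φ i = 1).card : ℤ)
      - ((Finset.univ.filter fun i => φ i = -1).card : ℤ) = T := by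
    rw [hT, ← Finset.sum_filter_add_sum_filter_not Finset.univ (fun i => φ i = 1) φ,
      hpartition]
    have h1 : ∑ i ∈ Finset.univ.filter (fun i => φ i = 1), φ i
        = ((Finset.univ.filter fun i => φ i = 1).card : ℤ) := by
      rw [Finset.sum_congr rfl fun i hi => (Finset.mem_filter.mp hi).2]
      simp
    have h2 : ∑ i ∈ Finset.univ.filter (fun i => φ i = -1), φ i
        = -((Finset.univ.filter fun i => φ i = -1).card : ℤ) := by
      rw [Finset.sum_congr rfl fun i hi => (Finset.mem_filter.mp hi).2]
      simp
    rw [h1, h2]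
    ring
  -- case analysis on T
  rcases hTval with hTv | hTv | hTv | hTv
  · -- T = 3 : odd vertices are those with φ i = 1, there are 2k+2 of them
    right
    have hfil : (Finset.univ.filter fun i => Odd (G.degree i))
        = Finset.univ.filter fun i => φ i = 1 := by
      apply Finset.filter_congr
      intro i _
      rw [parity i]
      rcases hsign i with h | h
      · have hNi : N i = 1 := by have := key i; omega
        simp [hNi, h]
      · have hNi : N i = 2 := by have := key i; omega
        simp [hNi, h]
    rw [hfil]
    omega
  · -- T = 1 : odd vertices are those with φ i = -1, there are 2k of them
    left
    have hfil : (Finset.univ.filter fun i => Odd (G.degree i))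
        = Finset.univ.filter fun i => φ i = -1 := by
      apply Finset.filter_congr
      intro i _
      rw [parity i]
      rcases hsign i with h | h
      · have hNi : N i = 0 := by have := key i; omega
        simp [hNi, h]
      · have hNi : N i = 1 := by have := key i; omega
        simp [hNi, h]
    rw [hfil]
    omega
  · -- T = -1 : odd vertices are those with φ i = 1, there are 2k of them
    left
    have hfil : (Finset.univ.filter fun i => Odd (G.degree i))
        = Finset.univ.filter fun i => φ i = 1 := by
      apply Finset.filter_congr
      intro i _
      rw [parity i]
      rcases hsign i with h | h
      · have hNi : N i = -1 := by have := key i; omega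
        simp [hNi, h]
      · have hNi : N i = 0 := by have := key i; omega
        simp [hNi, h]
    rw [hfil]
    omega
  · -- T = -3 : odd vertices are those with φ i = -1, there are 2k+2 of them
    right
    have hfil : (Finset.univ.filter fun i => Odd (G.degree i))
        = Finset.univ.filter fun i => φ i = -1 := by
      apply Finset.filter_congr
      intro i _
      rw [parity i]
      rcases hsign i with h | h
      · have hNi : N i = -2 := by have := key i; omega
        simp [hNi, h]
      · have hNi : N i = -1 := by have := key i; omega
        simp [hNi, h]
    rw [hfil]
    omega
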